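/- Let n ≥ 1 and γ ≥ 0. The function x ↦ (γ/2)·‖x‖₂² + P_γ(x) is convex on ℝⁿ; that is, the penalty P_γ is γ-weakly convex. -/

import Mathlib

open Finset

lemma sq_sum_eq' {ι : Type*} [LinearOrder ι] [DecidableEq ι] (s : Finset ι) (a : ι → ℝ) :
    (∑ i ∈ s, a i)^2 = ∑ i ∈ s, (a i)^2
      + 2 * ∑ i ∈ s, ∑ m ∈ s.filter (fun m => i < m), a i * a m := by
  induction s using Finset.induction_on with
  | empty => simp
  | @insert j s hj ih =>
    rw [Finset.sum_insert hj, Finset.sum_insert hj, add_sq, ih, Finset.sum_insert hj]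
    have hfilt : ∀ i ∈ s, (insert j s).filter (fun m => i < m)
        = if i < j then insert j (s.filter (fun m => i < m)) else s.filter (fun m => i < m) := by
      intro i hi
      split_ifs with h
      · rw [Finset.filter_insert, if_pos h]
      · rw [Finset.filter_insert, if_neg h]
    have hjnot : ∀ i, j ∉ s.filter (fun m => i < m) := by
      intro i hmem
      exact hj (Finset.mem_filter.mp hmem).1
    have h1 : ∑ i ∈ s, ∑ m ∈ (insert j s).filter (fun m => i < m), a i * a m
        = (∑ i ∈ s, ∑ m ∈ s.filter (fun m => i < m), a i * a m)
          + ∑ i ∈ s.filter (fun i => i < j), a i * a j := by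
      calc ∑ i ∈ s, ∑ m ∈ (insert j s).filter (fun m => i < m), a i * a m
          = ∑ i ∈ s, ((if i < j then a i * a j else 0)
              + ∑ m ∈ s.filter (fun m => i < m), a i * a m) := by
            refine Finset.sum_congr rfl fun i hi => ?_
            rw [hfilt i hi]
            split_ifs with h
            · rw [Finset.sum_insert (hjnot i)]
            · rw [zero_add]
        _ = (∑ i ∈ s, if i < j then a i * a j else 0)
              + ∑ i ∈ s, ∑ m ∈ s.filter (fun m => i < m), a i * a m :=
            Finset.sum_add_distrib
        _ = _ := by rw [← Finset.sum_filter]; ring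
    have h2 : (insert j s).filter (fun m => j < m) = s.filter (fun m => j < m) := by
      rw [Finset.filter_insert, if_neg (lt_irrefl j)]
    rw [h1, h2]
    have h3 : (∑ m ∈ s.filter (fun m => j < m), a j * a m)
        + ∑ i ∈ s.filter (fun i => i < j), a i * a j = a j * ∑ i ∈ s, a i := by
      rw [Finset.mul_sum, ← Finset.sum_filter_add_sum_filter_not s (fun i => i < j)
        (fun i => a j * a i)]
      have : s.filter (fun i => ¬ i < j) = s.filter (fun i => j < i) := by
        apply Finset.filter_congr
        intro i hi
        simp only [not_lt, eq_iff_iff]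
        constructor
        · intro h; rcases lt_or_eq_of_le h with h' | h'
          · exact h'
          · exact absurd h'.symm (fun he => hj (he ▸ hi))
        · exact le_of_lt
      rw [this]
      simp only [mul_comm]
      ring
    ring_nf
    ring_nf at h3 ⊢
    nlinarith [h3]

/-- The penalty `P_γ(x) = γ·(∑_{i<m} |x_i|·|x_m|) + ∑_i |x_i|` on `ℝⁿ`. -/
noncomputable def P (n : ℕ) (γ : ℝ) (x : Fin n → ℝ) : ℝ :=
  γ * (∑ i : Fin n, ∑ m ∈ Finset.Ioi i, |x i| * |x m|) + ∑ i : Fin n, |x i|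

lemma sumAbs_convex (n : ℕ) :
    ConvexOn ℝ Set.univ (fun x : Fin n → ℝ => ∑ i : Fin n, |x i|) := by
  refine ⟨convex_univ, fun x _ y _ a b ha hb hab => ?_⟩
  calc ∑ i : Fin n, |(a • x + b • y) i|
      ≤ ∑ i : Fin n, (a * |x i| + b * |y i|) := by
        refine Finset.sum_le_sum fun i _ => ?_
        calc |(a • x + b • y) i| = |a * x i + b * y i| := rfl
          _ ≤ |a * x i| + |b * y i| := abs_add_le _ _
          _ = a * |x i| + b * |y i| := by
              rw [abs_mul, abs_mul, abs_of_nonneg ha, abs_of_nonneg hb]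
    _ = a * ∑ i : Fin n, |x i| + b * ∑ i : Fin n, |y i| := by
        rw [Finset.sum_add_distrib, Finset.mul_sum, Finset.mul_sum]

/-- `P_γ` is `γ`-weakly convex: `x ↦ (γ/2)·‖x‖₂² + P_γ(x)` is convex on `ℝⁿ`. -/
theorem P_weakly_convex (n : ℕ) (hn : 1 ≤ n) (γ : ℝ) (hγ : 0 ≤ γ) :
    ConvexOn ℝ Set.univ
      (fun x : Fin n → ℝ => γ / 2 * ∑ i : Fin n, (x i) ^ 2 + P n γ x) := by
  have hIoi : ∀ i : Fin n, Finset.Ioi i = Finset.univ.filter (fun m => i < m) := by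
    intro i; ext m; simp
  have heq : (fun x : Fin n → ℝ => γ / 2 * ∑ i : Fin n, (x i) ^ 2 + P n γ x)
      = fun x : Fin n → ℝ => γ / 2 * (∑ i : Fin n, |x i|)^2 + ∑ i : Fin n, |x i| := by
    funext x
    have := sq_sum_eq' (Finset.univ : Finset (Fin n)) (fun i => |x i|)
    simp only [P]
    have habs : ∑ i : Fin n, (x i)^2 = ∑ i : Fin n, |x i|^2 := by
      refine Finset.sum_congr rfl fun i _ => (sq_abs (x i)).symm
    rw [habs]
    simp only [hIoi]
    rw [this]
    ring
  rw [heq]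
  -- outer function f(t) = γ/2 t^2 + t, convex and monotone on Ici 0
  set g : (Fin n → ℝ) → ℝ := fun x => ∑ i : Fin n, |x i| with hg
  set f : ℝ → ℝ := fun t => γ / 2 * t^2 + t with hf
  have himg : g '' Set.univ = Set.Ici (0 : ℝ) := by
    apply Set.Subset.antisymm
    · rintro _ ⟨x, -, rfl⟩
      exact Set.mem_Ici.mpr (Finset.sum_nonneg fun i _ => abs_nonneg _)
    · rintro t (ht : (0:ℝ) ≤ t)
      refine ⟨fun _ => t / n, Set.mem_univ _, ?_⟩
      have hn0 : (0:ℝ) < (n:ℝ) := by exact_mod_cast hn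
      simp only [hg]
      rw [Finset.sum_const, Finset.card_univ, Fintype.card_fin,
        abs_of_nonneg (by positivity : (0:ℝ) ≤ t / n)]
      rw [nsmul_eq_mul]
      field_simp
  have hfconv : ConvexOn ℝ (g '' Set.univ) f := by
    rw [himg]
    refine ⟨convex_Ici 0, fun u hu v hv a b ha hb hab => ?_⟩
    simp only [hf, smul_eq_mul]
    have key : a*u^2 + b*v^2 - (a*u+b*v)^2 = a*b*(u-v)^2 := by
      have hb' : b = 1 - a := by linarith
      subst hb'; ring
    nlinarith [key, mul_nonneg hγ (mul_nonneg (mul_nonneg ha hb) (sq_nonneg (u - v)))]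
  have hfmono : MonotoneOn f (g '' Set.univ) := by
    rw [himg]
    intro u (hu : (0:ℝ) ≤ u) v (hv : (0:ℝ) ≤ v) huv
    simp only [hf]
    nlinarith [mul_nonneg hγ (mul_nonneg (add_nonneg hu hv) (sub_nonneg.mpr huv))]
  have := hfconv.comp (sumAbs_convex n) hfmono
  exact this
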